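/- Let d ≥ 2 be an integer and set c₁ᵈ = 2d, c₂ᵈ = 8d², c₃ᵈ = 4d(d−1). Let B₂ > 0 and B₄ > 0, and let A₂, A₄ : (0,∞) × {1, √2, 2} → ℝ be functions satisfying A₂(h,r) = r² h² B₂ + o(h²) and A₄(h,r) = r⁴ h⁴ B₄ + o(h⁴) as h → 0⁺, for each r ∈ {1, √2, 2}, with A₂(h,r), A₄(h,r) > 0. Define μ₂(h) := ( [c₂ᵈ + 8c₁ᵈ] A₄(h,1) + c₁ᵈ A₄(h,1)·A₂(h,2)/A₂(h,1) − c₁ᵈ A₄(h,2) ) / ( c₃ᵈ A₄(h,√2) − c₃ᵈ A₄(h,1)·A₂(h,√2)/A₂(h,1) ) and μ₁(h) := ( c₃ᵈ μ₂(h) A₂(h,√2) + c₁ᵈ A₂(h,2) ) / ( c₂ᵈ A₂(h,1) ). Then μ₁(h) = 1 + o(1) and μ₂(h) = 1 + o(1) as h → 0⁺. -/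

import Mathlib

open Filter Topology Asymptotics

private lemma div_eq_div_div_aux (a b c : ℝ) (hc : c ≠ 0) : a / b = (a / c) / (b / c) := by
  rcases eq_or_ne b 0 with hb | hb
  · simp [hb]
  · field_simp

theorem stmt_5 (d : ℕ) (hd : 2 ≤ d)
    (c1 c2 c3 : ℝ) (hc1 : c1 = 2 * (d : ℝ)) (hc2 : c2 = 8 * (d : ℝ) ^ 2)
    (hc3 : c3 = 4 * (d : ℝ) * ((d : ℝ) - 1))
    (B2 B4 : ℝ) (hB2 : 0 < B2) (hB4 : 0 < B4)
    (A2 A4 : ℝ → ℝ → ℝ)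
    (hA2 : ∀ r ∈ ({1, Real.sqrt 2, 2} : Set ℝ),
      (fun h => A2 h r - r ^ 2 * h ^ 2 * B2) =o[𝓝[>] (0:ℝ)] fun h => h ^ 2)
    (hA4 : ∀ r ∈ ({1, Real.sqrt 2, 2} : Set ℝ),
      (fun h => A4 h r - r ^ 4 * h ^ 4 * B4) =o[𝓝[>] (0:ℝ)] fun h => h ^ 4)
    (hA2pos : ∀ r ∈ ({1, Real.sqrt 2, 2} : Set ℝ), ∀ h : ℝ, 0 < h → 0 < A2 h r)
    (hA4pos : ∀ r ∈ ({1, Real.sqrt 2, 2} : Set ℝ), ∀ h : ℝ, 0 < h → 0 < A4 h r)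
    (μ2 μ1 : ℝ → ℝ)
    (hμ2 : ∀ h, μ2 h =
      ((c2 + 8 * c1) * A4 h 1 + c1 * A4 h 1 * A2 h 2 / A2 h 1 - c1 * A4 h 2) /
        (c3 * A4 h (Real.sqrt 2) - c3 * A4 h 1 * A2 h (Real.sqrt 2) / A2 h 1))
    (hμ1 : ∀ h, μ1 h =
      (c3 * μ2 h * A2 h (Real.sqrt 2) + c1 * A2 h 2) / (c2 * A2 h 1)) :
    Tendsto μ1 (𝓝[>] (0:ℝ)) (𝓝 1) ∧ Tendsto μ2 (𝓝[>] (0:ℝ)) (𝓝 1) := by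
  have hd2 : (2:ℝ) ≤ (d:ℝ) := by exact_mod_cast hd
  have hdne : (d:ℝ) ≠ 0 := by linarith
  have hdne1 : (d:ℝ) - 1 ≠ 0 := by linarith
  have hm1 : (1:ℝ) ∈ ({1, Real.sqrt 2, 2} : Set ℝ) := by left; rfl
  have hms : Real.sqrt 2 ∈ ({1, Real.sqrt 2, 2} : Set ℝ) := by right; left; rfl
  have hm2 : (2:ℝ) ∈ ({1, Real.sqrt 2, 2} : Set ℝ) := by right; right; rfl
  have s2 : Real.sqrt 2 ^ 2 = 2 := Real.sq_sqrt (by norm_num)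
  have s4 : Real.sqrt 2 ^ 4 = 4 := by
    rw [show (4:ℕ) = 2 * 2 from rfl, pow_mul, s2]; norm_num
  set F := 𝓝[>] (0:ℝ)
  have hmem : ∀ᶠ h in F, h ∈ Set.Ioi (0:ℝ) := self_mem_nhdsWithin
  -- limits of the rescaled quantities
  have key2 : ∀ r ∈ ({1, Real.sqrt 2, 2} : Set ℝ),
      Tendsto (fun h => A2 h r / h ^ 2) F (𝓝 (r ^ 2 * B2)) := by
    intro r hr
    have h1 := (hA2 r hr).tendsto_div_nhds_zero
    have h2 : Tendsto (fun h => (A2 h r - r ^ 2 * h ^ 2 * B2) / h ^ 2 + r ^ 2 * B2)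
        F (𝓝 (0 + r ^ 2 * B2)) := h1.add tendsto_const_nhds
    rw [zero_add] at h2
    refine h2.congr' ?_
    filter_upwards [hmem] with h hh
    have hne : h ≠ 0 := ne_of_gt hh
    field_simp
    ring
  have key4 : ∀ r ∈ ({1, Real.sqrt 2, 2} : Set ℝ),
      Tendsto (fun h => A4 h r / h ^ 4) F (𝓝 (r ^ 4 * B4)) := by
    intro r hr
    have h1 := (hA4 r hr).tendsto_div_nhds_zero
    have h2 : Tendsto (fun h => (A4 h r - r ^ 4 * h ^ 4 * B4) / h ^ 4 + r ^ 4 * B4)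
        F (𝓝 (0 + r ^ 4 * B4)) := h1.add tendsto_const_nhds
    rw [zero_add] at h2
    refine h2.congr' ?_
    filter_upwards [hmem] with h hh
    have hne : h ≠ 0 := ne_of_gt hh
    field_simp
    ring
  have t21 : Tendsto (fun h => A2 h 1 / h ^ 2) F (𝓝 B2) := by
    have := key2 1 hm1; simpa using this
  have t2s : Tendsto (fun h => A2 h (Real.sqrt 2) / h ^ 2) F (𝓝 (2 * B2)) := by
    have := key2 _ hms; rwa [s2] at this
  have t22 : Tendsto (fun h => A2 h 2 / h ^ 2) F (𝓝 (4 * B2)) := by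
    convert key2 2 hm2 using 2; norm_num
  have t41 : Tendsto (fun h => A4 h 1 / h ^ 4) F (𝓝 B4) := by
    have := key4 1 hm1; simpa using this
  have t4s : Tendsto (fun h => A4 h (Real.sqrt 2) / h ^ 4) F (𝓝 (4 * B4)) := by
    have := key4 _ hms; rwa [s4] at this
  have t42 : Tendsto (fun h => A4 h 2 / h ^ 4) F (𝓝 (16 * B4)) := by
    convert key4 2 hm2 using 2; norm_num
  -- rescaled numerator and denominator of μ2
  set N' : ℝ → ℝ := fun h =>
    (c2 + 8 * c1) * (A4 h 1 / h ^ 4)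
      + c1 * (A4 h 1 / h ^ 4) * ((A2 h 2 / h ^ 2) / (A2 h 1 / h ^ 2))
      - c1 * (A4 h 2 / h ^ 4) with hN'
  set D' : ℝ → ℝ := fun h =>
    c3 * (A4 h (Real.sqrt 2) / h ^ 4)
      - c3 * (A4 h 1 / h ^ 4) * ((A2 h (Real.sqrt 2) / h ^ 2) / (A2 h 1 / h ^ 2)) with hD'
  have tN : Tendsto N' F (𝓝 ((c2 + 8 * c1) * B4 + c1 * B4 * (4 * B2 / B2) - c1 * (16 * B4))) := by
    exact (((tendsto_const_nhds.mul t41).add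
      ((tendsto_const_nhds.mul t41).mul (t22.div t21 hB2.ne'))).sub
      (tendsto_const_nhds.mul t42))
  have tD : Tendsto D' F (𝓝 (c3 * (4 * B4) - c3 * B4 * (2 * B2 / B2))) := by
    exact (tendsto_const_nhds.mul t4s).sub
      ((tendsto_const_nhds.mul t41).mul (t2s.div t21 hB2.ne'))
  have hDlim : c3 * (4 * B4) - c3 * B4 * (2 * B2 / B2) = 2 * c3 * B4 := by
    field_simp; ring
  rw [hDlim] at tD
  have hNlim : (c2 + 8 * c1) * B4 + c1 * B4 * (4 * B2 / B2) - c1 * (16 * B4)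
      = (c2 - 4 * c1) * B4 := by
    field_simp; ring
  rw [hNlim] at tN
  have hDne : 2 * c3 * B4 ≠ 0 := by
    rw [hc3]
    positivity
  have hDevne : ∀ᶠ h in F, D' h ≠ 0 := tD.eventually_ne hDne
  -- μ2 eventually equals N'/D'
  have heq2 : ∀ᶠ h in F, μ2 h = N' h / D' h := by
    filter_upwards [hmem] with h hh
    have hne : h ≠ 0 := ne_of_gt hh
    have hA21 : A2 h 1 ≠ 0 := (hA2pos 1 hm1 h hh).ne'
    rw [hμ2 h, div_eq_div_div_aux _ _ (h ^ 4) (pow_ne_zero _ hne), hN', hD']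
    congr 1
    · field_simp
    · field_simp
  have tμ2 : Tendsto μ2 F (𝓝 (((c2 - 4 * c1) * B4) / (2 * c3 * B4))) :=
    (tN.div tD hDne).congr' (by filter_upwards [heq2] with h hh using hh.symm)
  have hμ2lim : ((c2 - 4 * c1) * B4) / (2 * c3 * B4) = 1 := by
    rw [div_eq_one_iff_eq hDne, hc1, hc2, hc3]
    ring
  rw [hμ2lim] at tμ2
  -- μ1
  refine ⟨?_, tμ2⟩
  have tNum1 : Tendsto (fun h => c3 * μ2 h * (A2 h (Real.sqrt 2) / h ^ 2)
      + c1 * (A2 h 2 / h ^ 2)) F (𝓝 (c3 * 1 * (2 * B2) + c1 * (4 * B2))) :=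
    ((tendsto_const_nhds.mul tμ2).mul t2s).add (tendsto_const_nhds.mul t22)
  have tDen1 : Tendsto (fun h => c2 * (A2 h 1 / h ^ 2)) F (𝓝 (c2 * B2)) :=
    tendsto_const_nhds.mul t21
  have hc2B2 : c2 * B2 ≠ 0 := by rw [hc2]; positivity
  have heq1 : ∀ᶠ h in F, μ1 h = (c3 * μ2 h * (A2 h (Real.sqrt 2) / h ^ 2)
      + c1 * (A2 h 2 / h ^ 2)) / (c2 * (A2 h 1 / h ^ 2)) := by
    filter_upwards [hmem] with h hh
    have hne : h ≠ 0 := ne_of_gt hh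
    rw [hμ1 h, div_eq_div_div_aux _ _ (h ^ 2) (pow_ne_zero _ hne)]
    congr 1
    · field_simp
    · field_simp
  have tμ1 : Tendsto μ1 F
      (𝓝 ((c3 * 1 * (2 * B2) + c1 * (4 * B2)) / (c2 * B2))) :=
    (tNum1.div tDen1 hc2B2).congr' (by filter_upwards [heq1] with h hh using hh.symm)
  have hμ1lim : (c3 * 1 * (2 * B2) + c1 * (4 * B2)) / (c2 * B2) = 1 := by
    rw [div_eq_one_iff_eq hc2B2, hc1, hc2, hc3]
    ring
  rwa [hμ1lim] at tμ1
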